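/- For every pair of integers n, j with n ≥ 2 and 1 ≤ j ≤ n−1, the binomial coefficient satisfies (1/(√(2π)·e^{1/6}))·(1/(√n·γ(j/n)))·varphi(j/n)^n ≤ C(n,j) ≤ (e^{1/12}/√(2π))·(1/(√n·γ(j/n)))·varphi(j/n)^n. -/

import Mathlib

noncomputable def varphi (x : ℝ) : ℝ := x ^ (-x) * (1 - x) ^ (-(1 - x))

noncomputable def gam (x : ℝ) : ℝ := Real.sqrt (x - x ^ 2)

open scoped Topology
open Finset Filter Nat Real Stirling

lemma my_diff_le (n : ℕ) :
    Real.log (stirlingSeq (n + 1)) - Real.log (stirlingSeq (n + 2)) ≤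
      1 / (12 * ((n : ℝ) + 1)) - 1 / (12 * ((n : ℝ) + 2)) := by
  have h_nonneg : (0 : ℝ) ≤ ((1 : ℝ) / (2 * ↑(n + 1) + 1)) ^ 2 := sq_nonneg _
  have hlt : ((1 : ℝ) / (2 * ↑(n + 1) + 1)) ^ 2 < 1 := by
    rw [one_div, inv_pow]
    refine inv_lt_one_of_one_lt₀ (one_lt_pow₀ ?_ two_ne_zero)
    push_cast; nlinarith [show (0:ℝ) ≤ (n:ℝ) by positivity]
  have g : HasSum (fun k : ℕ => (1/3 : ℝ) * (((1 : ℝ) / (2 * ↑(n + 1) + 1)) ^ 2) ^ (k + 1))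
      ((1/3 : ℝ) * ((((1 : ℝ) / (2 * ↑(n + 1) + 1)) ^ 2) / (1 - ((1 : ℝ) / (2 * ↑(n + 1) + 1)) ^ 2))) := by
    have := ((hasSum_geometric_of_lt_one h_nonneg hlt).mul_left
      (((1 : ℝ) / (2 * ↑(n + 1) + 1)) ^ 2)).mul_left (1/3 : ℝ)
    simp_rw [← _root_.pow_succ'] at this
    simpa [mul_div_assoc, div_eq_mul_inv] using this
  have hab : ∀ k : ℕ, (1 : ℝ) / (2 * ↑(k + 1) + 1) * ((1 / (2 * ↑(n + 1) + 1)) ^ 2) ^ (k + 1) ≤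
      (1/3 : ℝ) * (((1 : ℝ) / (2 * ↑(n + 1) + 1)) ^ 2) ^ (k + 1) := by
    intro k
    apply mul_le_mul_of_nonneg_right _ (pow_nonneg h_nonneg _)
    rw [div_le_div_iff₀ (by positivity) (by norm_num)]
    push_cast; nlinarith [show (0:ℝ) ≤ (k:ℝ) by positivity]
  have key := hasSum_le hab (log_stirlingSeq_diff_hasSum n) g
  refine key.trans (le_of_eq ?_)
  have h1 : (2 * (↑(n + 1) : ℝ) + 1) ≠ 0 := by positivity
  have h2 : (1 : ℝ) - ((1 : ℝ) / (2 * ↑(n + 1) + 1)) ^ 2 ≠ 0 := by nlinarith [hlt]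
  have h3 : (24 + (n:ℝ) * 36 + (n:ℝ)^2 * 12) ≠ 0 := by positivity
  push_cast
  have h4 : (8 + (n:ℝ) * 12 + (n:ℝ)^2 * 4) ≠ 0 := by positivity
  field_simp
  linear_combination (3:ℝ) * mul_inv_cancel₀ h4

lemma stirling_lower (n : ℕ) : Real.sqrt π ≤ stirlingSeq (n + 1) := by
  have ht : Tendsto (fun m : ℕ => stirlingSeq (m + 1)) atTop (𝓝 (Real.sqrt π)) :=
    tendsto_stirlingSeq_sqrt_pi.comp (tendsto_add_atTop_nat 1)
  refine le_of_tendsto ht ?_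
  filter_upwards [eventually_ge_atTop n] with m hm
  simpa using stirlingSeq'_antitone hm

lemma stirling_upper (n : ℕ) :
    stirlingSeq (n + 1) ≤ Real.sqrt π * Real.exp (1 / (12 * ((n : ℝ) + 1))) := by
  have htel : ∀ m : ℕ, Real.log (stirlingSeq (n + 1)) - 1 / (12 * ((n : ℝ) + 1))
      + 1 / (12 * ((n : ℝ) + (m : ℝ) + 1)) ≤ Real.log (stirlingSeq (n + 1 + m)) := by
    intro m
    induction m with
    | zero => simp
    | succ m ih =>
      have h := my_diff_le (n + m)
      have : stirlingSeq (n + 1 + (m + 1)) = stirlingSeq (n + m + 2) := by ring_nf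
      rw [this]
      have h3 : stirlingSeq (n + 1 + m) = stirlingSeq (n + m + 1) := by ring_nf
      rw [h3] at ih
      push_cast at h ih ⊢
      have e : ((n:ℝ) + ((m:ℝ) + 1) + 1 : ℝ) = (n:ℝ) + (m:ℝ) + 2 := by ring
      rw [e]
      linarith
  have hsp : (0:ℝ) < Real.sqrt π := Real.sqrt_pos.mpr pi_pos
  have hlog : Real.log (stirlingSeq (n + 1)) - 1 / (12 * ((n : ℝ) + 1)) ≤ Real.log (Real.sqrt π) := by
    have ht : Tendsto (fun m : ℕ => Real.log (stirlingSeq (n + 1 + m))) atTop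
        (𝓝 (Real.log (Real.sqrt π))) := by
      have h1 : Tendsto (fun m : ℕ => stirlingSeq (n + 1 + m)) atTop (𝓝 (Real.sqrt π)) := by
        have := tendsto_stirlingSeq_sqrt_pi.comp (tendsto_add_atTop_nat (n + 1))
        simpa [Function.comp_def, Nat.add_comm] using this
      exact ((Real.continuousAt_log hsp.ne').tendsto.comp h1)
    refine ge_of_tendsto ht (Eventually.of_forall fun m => ?_)
    have := htel m
    have h2 : (0:ℝ) < 1 / (12 * ((n : ℝ) + (m : ℝ) + 1)) := by positivity
    linarith
  have hpos := stirlingSeq'_pos n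
  rw [← Real.exp_log hpos, ← Real.exp_log hsp, ← Real.exp_add]
  exact Real.exp_le_exp.mpr (by linarith)

lemma sqrt_two_pi_eq (n : ℕ) :
    Real.sqrt π * Real.sqrt (2 * (n:ℝ)) = Real.sqrt (2 * π) * Real.sqrt n := by
  rw [← Real.sqrt_mul pi_pos.le, ← Real.sqrt_mul (by positivity : (0:ℝ) ≤ 2 * π)]
  ring_nf

lemma factorial_lower (n : ℕ) (h : 1 ≤ n) :
    Real.sqrt (2 * π) * Real.sqrt n * ((n : ℝ) / Real.exp 1) ^ n ≤ (n ! : ℝ) := by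
  obtain ⟨m, rfl⟩ := Nat.exists_eq_succ_of_ne_zero (Nat.one_le_iff_ne_zero.mp h)
  have hD : (0:ℝ) < Real.sqrt (2 * ((m + 1 : ℕ) : ℝ)) * (((m + 1 : ℕ) : ℝ) / Real.exp 1) ^ (m + 1) := by
    have : (0:ℝ) < ((m + 1 : ℕ) : ℝ) := by positivity
    positivity
  have hs := stirling_lower m
  have hseq : stirlingSeq (m + 1) = ((m + 1)! : ℝ) /
      (Real.sqrt (2 * ((m + 1 : ℕ) : ℝ)) * (((m + 1 : ℕ) : ℝ) / Real.exp 1) ^ (m + 1)) := rfl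
  rw [hseq, le_div_iff₀ hD] at hs
  refine le_trans (le_of_eq ?_) hs
  rw [← sqrt_two_pi_eq]
  simp only [Nat.succ_eq_add_one]
  push_cast
  ring

lemma factorial_upper (n : ℕ) (h : 1 ≤ n) :
    (n ! : ℝ) ≤ Real.sqrt (2 * π) * Real.sqrt n * ((n : ℝ) / Real.exp 1) ^ n
      * Real.exp (1 / (12 * (n:ℝ))) := by
  obtain ⟨m, rfl⟩ := Nat.exists_eq_succ_of_ne_zero (Nat.one_le_iff_ne_zero.mp h)
  have hD : (0:ℝ) < Real.sqrt (2 * ((m + 1 : ℕ) : ℝ)) * (((m + 1 : ℕ) : ℝ) / Real.exp 1) ^ (m + 1) := by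
    have : (0:ℝ) < ((m + 1 : ℕ) : ℝ) := by positivity
    positivity
  have hs := stirling_upper m
  have hseq : stirlingSeq (m + 1) = ((m + 1)! : ℝ) /
      (Real.sqrt (2 * ((m + 1 : ℕ) : ℝ)) * (((m + 1 : ℕ) : ℝ) / Real.exp 1) ^ (m + 1)) := rfl
  rw [hseq, div_le_iff₀ hD] at hs
  refine hs.trans (le_of_eq ?_)
  rw [← sqrt_two_pi_eq]
  simp only [Nat.succ_eq_add_one]
  push_cast
  ring

theorem stmt_5 (n j : ℕ) (hn : 2 ≤ n) (hj1 : 1 ≤ j) (hj2 : j ≤ n - 1) :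
    (1 / (Real.sqrt (2 * Real.pi) * Real.exp (1 / 6))) *
        (1 / (Real.sqrt n * gam ((j : ℝ) / n))) * varphi ((j : ℝ) / n) ^ n ≤
      (Nat.choose n j : ℝ) ∧
    (Nat.choose n j : ℝ) ≤
      (Real.exp (1 / 12) / Real.sqrt (2 * Real.pi)) *
        (1 / (Real.sqrt n * gam ((j : ℝ) / n))) * varphi ((j : ℝ) / n) ^ n := by
  -- setup
  set k := n - j with hkdef
  have hjn : j < n := lt_of_le_of_lt hj2 (Nat.sub_lt (by omega) one_pos)
  have hk1 : 1 ≤ k := by omega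
  have hjk : j + k = n := by omega
  have hn0 : (0:ℝ) < n := by positivity
  have hj0 : (0:ℝ) < j := by exact_mod_cast hj1
  have hk0 : (0:ℝ) < k := by exact_mod_cast hk1
  have hnjk : (j:ℝ) + k = n := by exact_mod_cast hjk
  have hx0 : (0:ℝ) < (j:ℝ)/n := by positivity
  have h1x : 1 - (j:ℝ)/n = (k:ℝ)/n := by field_simp; linarith
  have h1x0 : (0:ℝ) < 1 - (j:ℝ)/n := by rw [h1x]; positivity
  -- varphi power identity
  have hVn : varphi ((j:ℝ)/n) ^ n = (n:ℝ)^n / ((j:ℝ)^j * (k:ℝ)^k) := by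
    have e1 : (((j:ℝ)/n) ^ (-((j:ℝ)/n))) ^ n = ((j:ℝ)^j / (n:ℝ)^j)⁻¹ := by
      rw [← Real.rpow_natCast (((j:ℝ)/n) ^ (-((j:ℝ)/n))) n, ← Real.rpow_mul hx0.le]
      have : (-((j:ℝ)/n)) * (n:ℝ) = -(j:ℝ) := by field_simp
      rw [this, Real.rpow_neg hx0.le, Real.rpow_natCast, div_pow]
    have e2 : ((1 - (j:ℝ)/n) ^ (-(1 - (j:ℝ)/n))) ^ n = ((k:ℝ)^k / (n:ℝ)^k)⁻¹ := by
      rw [← Real.rpow_natCast ((1 - (j:ℝ)/n) ^ (-(1 - (j:ℝ)/n))) n, ← Real.rpow_mul h1x0.le]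
      have : (-(1 - (j:ℝ)/n)) * (n:ℝ) = -(k:ℝ) := by rw [h1x]; field_simp
      rw [this, Real.rpow_neg h1x0.le, Real.rpow_natCast, h1x, div_pow]
    have hpow : (n:ℝ)^j * (n:ℝ)^k = (n:ℝ)^n := by rw [← pow_add, hjk]
    rw [varphi, mul_pow, e1, e2]
    rw [← hpow]
    field_simp
  -- gamma identity
  have hG : Real.sqrt n * gam ((j:ℝ)/n) = Real.sqrt j * Real.sqrt k / Real.sqrt n := by
    have hxx : (j:ℝ)/n - ((j:ℝ)/n)^2 = (j:ℝ) * k / (n:ℝ)^2 := by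
      field_simp
      linear_combination (-1:ℝ) * hnjk
    have hsn : (0:ℝ) < Real.sqrt n := Real.sqrt_pos.mpr hn0
    rw [gam, hxx, Real.sqrt_div (by positivity) _, Real.sqrt_mul hj0.le, Real.sqrt_sq hn0.le,
      ← mul_div_assoc, div_eq_div_iff hn0.ne' hsn.ne']
    linear_combination (Real.sqrt j * Real.sqrt k) * (Real.mul_self_sqrt hn0.le)
  -- choose as quotient of factorials
  have hC : (n.choose j : ℝ) = (n ! : ℝ) / ((j ! : ℝ) * (k ! : ℝ)) := by
    rw [eq_div_iff (by positivity)]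
    rw [mul_comm ((j ! : ℝ)) ((k ! : ℝ)), ← mul_assoc]
    norm_cast
    rw [mul_assoc, mul_comm (k !) (j !), ← mul_assoc]
    exact Nat.choose_mul_factorial_mul_factorial hjn.le
  set S := Real.sqrt (2 * π) with hSdef
  set E := Real.exp 1 with hEdef
  have hS0 : (0:ℝ) < S := Real.sqrt_pos.mpr (by positivity)
  have hE0 : (0:ℝ) < E := Real.exp_pos 1
  have hsn : (0:ℝ) < Real.sqrt n := Real.sqrt_pos.mpr hn0
  have hsj : (0:ℝ) < Real.sqrt j := Real.sqrt_pos.mpr hj0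
  have hsk : (0:ℝ) < Real.sqrt k := Real.sqrt_pos.mpr hk0
  have he12 : (0:ℝ) < Real.exp (1/12) := Real.exp_pos _
  have hLn := factorial_lower n (by omega)
  have hLj := factorial_lower j hj1
  have hLk := factorial_lower k hk1
  have hexp_mono : ∀ m : ℕ, 1 ≤ m → Real.exp (1 / (12 * (m:ℝ))) ≤ Real.exp (1/12) := by
    intro m hm
    apply Real.exp_le_exp.mpr
    have hm0 : (1:ℝ) ≤ (m:ℝ) := by exact_mod_cast hm
    rw [div_le_div_iff₀ (by positivity) (by norm_num)]
    nlinarith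
  have hUn' : (n ! : ℝ) ≤ S * Real.sqrt n * ((n:ℝ)/E)^n * Real.exp (1/12) := by
    refine (factorial_upper n (by omega)).trans ?_
    have h1 : (0:ℝ) ≤ S * Real.sqrt n * ((n:ℝ)/E)^n := by positivity
    exact mul_le_mul_of_nonneg_left (hexp_mono n (by omega)) h1
  have hUj' : (j ! : ℝ) ≤ S * Real.sqrt j * ((j:ℝ)/E)^j * Real.exp (1/12) := by
    refine (factorial_upper j hj1).trans ?_
    have h1 : (0:ℝ) ≤ S * Real.sqrt j * ((j:ℝ)/E)^j := by positivity
    exact mul_le_mul_of_nonneg_left (hexp_mono j hj1) h1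
  have hUk' : (k ! : ℝ) ≤ S * Real.sqrt k * ((k:ℝ)/E)^k * Real.exp (1/12) := by
    refine (factorial_upper k hk1).trans ?_
    have h1 : (0:ℝ) ≤ S * Real.sqrt k * ((k:ℝ)/E)^k := by positivity
    exact mul_le_mul_of_nonneg_left (hexp_mono k hk1) h1
  have hE_split : E^n = E^j * E^k := by rw [← pow_add, hjk]
  have h6 : Real.exp (1/6) = Real.exp (1/12) * Real.exp (1/12) := by
    rw [← Real.exp_add]; norm_num
  have hjj : ((j:ℝ))^j ≠ 0 := by positivity
  have hkk : ((k:ℝ))^k ≠ 0 := by positivity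
  have hEj : (E:ℝ)^j ≠ 0 := by positivity
  have hEk : (E:ℝ)^k ≠ 0 := by positivity
  constructor
  · calc (1 / (S * Real.exp (1 / 6))) * (1 / (Real.sqrt n * gam ((j : ℝ) / n)))
          * varphi ((j : ℝ) / n) ^ n
        = (S * Real.sqrt n * ((n:ℝ)/E)^n) /
            ((S * Real.sqrt j * ((j:ℝ)/E)^j * Real.exp (1/12)) *
             (S * Real.sqrt k * ((k:ℝ)/E)^k * Real.exp (1/12))) := by
          rw [hVn, hG, h6]
          simp only [div_pow]
          rw [hE_split]
          field_simp
      _ ≤ (n ! : ℝ) / ((j ! : ℝ) * (k ! : ℝ)) := by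
          refine div_le_div₀ (by positivity) hLn (by positivity) ?_
          exact mul_le_mul hUj' hUk' (by positivity) (by positivity)
      _ = (n.choose j : ℝ) := hC.symm
  · calc (n.choose j : ℝ) = (n ! : ℝ) / ((j ! : ℝ) * (k ! : ℝ)) := hC
      _ ≤ (S * Real.sqrt n * ((n:ℝ)/E)^n * Real.exp (1/12)) /
            ((S * Real.sqrt j * ((j:ℝ)/E)^j) * (S * Real.sqrt k * ((k:ℝ)/E)^k)) := by
          refine div_le_div₀ (by positivity) hUn' (by positivity) ?_
          exact mul_le_mul hLj hLk (by positivity) (by positivity)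
      _ = (Real.exp (1 / 12) / S) * (1 / (Real.sqrt n * gam ((j : ℝ) / n)))
          * varphi ((j : ℝ) / n) ^ n := by
          rw [hVn, hG]
          simp only [div_pow]
          rw [hE_split]
          field_simp
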